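/- For every real s > 0 and all x, y > 0 with x ≠ y, one has 2·𝕂^{Bessel}_{2,2s}(4x, 4y) − 2·(x/y)^{1/2}·𝕂^{Bessel}_{2,2s−1}(4x, 4y) = −J_{2s}(2√x)·J_{2s−1}(2√y)/(2√y). -/

import Mathlib

open MeasureTheory Filter

/-- The Bessel function of the first kind
`J_ν(x) = Σ_{k=0}^∞ (−1)^k (x/2)^{ν+2k} / (k! Γ(ν+k+1))`
(with real power `(x/2)^{ν+2k}`, for `x > 0`). -/
noncomputable def besselJ (ν x : ℝ) : ℝ :=
  ∑' k : ℕ, (-1) ^ k * (x / 2) ^ (ν + 2 * (k : ℝ)) /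
    ((Nat.factorial k : ℝ) * Real.Gamma (ν + (k : ℝ) + 1))

/-- The Bessel determinantal kernel
`𝕂^{Bessel}_{2,s}(x,y) = (√x J_{s+1}(√x) J_s(√y) − √y J_{s+1}(√y) J_s(√x)) / (2(x−y))`. -/
noncomputable def besselKernel (s x y : ℝ) : ℝ :=
  (Real.sqrt x * besselJ (s + 1) (Real.sqrt x) * besselJ s (Real.sqrt y)
    - Real.sqrt y * besselJ (s + 1) (Real.sqrt y) * besselJ s (Real.sqrt x))
    / (2 * (x - y))

/-- The general term of the Bessel series. -/
noncomputable def bterm (ν x : ℝ) (k : ℕ) : ℝ :=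
  (-1) ^ k * (x / 2) ^ (ν + 2 * (k : ℝ)) /
    ((Nat.factorial k : ℝ) * Real.Gamma (ν + (k : ℝ) + 1))

lemma besselJ_eq_tsum (ν x : ℝ) : besselJ ν x = ∑' k : ℕ, bterm ν x k := rfl

lemma summable_bterm (ν x : ℝ) (hν : -1 < ν) (hx : 0 < x) : Summable (bterm ν x) := by
  have hp : (0:ℝ) < x / 2 := by linarith
  apply summable_of_ratio_norm_eventually_le (r := 1/2) (by norm_num)
  filter_upwards [Filter.eventually_ge_atTop ⌈2 * (x/2)^2⌉₊,
    Filter.eventually_ge_atTop ⌈-ν⌉₊] with k hk1 hk2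
  have hc1 : 2 * (x/2)^2 ≤ (k:ℝ) := by
    calc 2 * (x/2)^2 ≤ (⌈2 * (x/2)^2⌉₊ : ℝ) := Nat.le_ceil _
    _ ≤ (k:ℝ) := by exact_mod_cast hk1
  have hc2 : -ν ≤ (k:ℝ) := by
    calc -ν ≤ (⌈-ν⌉₊ : ℝ) := Nat.le_ceil _
    _ ≤ (k:ℝ) := by exact_mod_cast hk2
  have hG : 0 < Real.Gamma (ν + (k:ℝ) + 1) := Real.Gamma_pos_of_pos (by linarith)
  have hkf : (0:ℝ) < (Nat.factorial k : ℝ) := by exact_mod_cast k.factorial_pos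
  have hq : (0:ℝ) < (x/2) ^ (ν + 2 * (k:ℝ)) := Real.rpow_pos_of_pos hp _
  have habs : ∀ m : ℕ, ‖bterm ν x m‖ =
      (x/2) ^ (ν + 2 * (m:ℝ)) / ((Nat.factorial m : ℝ) * Real.Gamma (ν + (m:ℝ) + 1)) := by
    intro m
    have hm0 : (0:ℝ) ≤ (m:ℝ) := m.cast_nonneg
    have hGm : 0 < Real.Gamma (ν + (m:ℝ) + 1) :=
      Real.Gamma_pos_of_pos (by linarith)
    have hfm : (0:ℝ) < (Nat.factorial m : ℝ) := by exact_mod_cast m.factorial_pos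
    rw [bterm, Real.norm_eq_abs, abs_div, abs_mul, abs_pow, abs_neg, abs_one, one_pow, one_mul,
      abs_of_pos (Real.rpow_pos_of_pos hp _), abs_of_pos (by positivity)]
  rw [habs, habs]
  have hGrec : Real.Gamma (ν + ((k:ℕ)+1:ℕ) + 1) = (ν + (k:ℝ) + 1) * Real.Gamma (ν + (k:ℝ) + 1) := by
    push_cast
    rw [show ν + ((k:ℝ)+1) + 1 = (ν + (k:ℝ) + 1) + 1 by ring,
      Real.Gamma_add_one (by nlinarith [Nat.cast_nonneg (α := ℝ) k])]
  have hrpow : (x/2) ^ (ν + 2 * (((k:ℕ)+1:ℕ):ℝ)) = (x/2) ^ (ν + 2*(k:ℝ)) * (x/2)^(2:ℝ) := by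
    push_cast
    rw [← Real.rpow_add hp]
    ring_nf
  rw [hGrec, hrpow, Nat.factorial_succ]
  push_cast
  have h2 : (x/2)^(2:ℝ) = (x/2)^2 := by rw [Real.rpow_two]
  have hden1 : (0:ℝ) < ((k:ℝ)+1) * (k.factorial:ℝ) * ((ν+(k:ℝ)+1) * Real.Gamma (ν+(k:ℝ)+1)) :=
    mul_pos (mul_pos (by positivity) hkf) (mul_pos (by linarith) hG)
  have hden2 : (0:ℝ) < 2 * ((k.factorial:ℝ) * Real.Gamma (ν+(k:ℝ)+1)) := by
    linarith [mul_pos hkf hG]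
  rw [h2, show (1:ℝ)/2 * ((x/2)^(ν+2*(k:ℝ))/((k.factorial:ℝ) * Real.Gamma (ν+(k:ℝ)+1)))
      = (x/2)^(ν+2*(k:ℝ))*1/(2*((k.factorial:ℝ) * Real.Gamma (ν+(k:ℝ)+1))) by ring,
    div_le_div_iff₀ hden1 hden2]
  have hk1' : (1:ℝ) ≤ ν + (k:ℝ) + 1 := by linarith
  have h5 : 2*(x/2)^2 ≤ ((k:ℝ)+1)*(ν+(k:ℝ)+1) := by nlinarith [Nat.cast_nonneg (α := ℝ) k]
  have h6 := mul_le_mul_of_nonneg_left h5 (mul_nonneg (mul_nonneg hq.le hkf.le) hG.le)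
  nlinarith [h6]

lemma besselJ_recurrence (ν x : ℝ) (hν : 0 < ν) (hx : 0 < x) :
    besselJ (ν - 1) x + besselJ (ν + 1) x = (2 * ν / x) * besselJ ν x := by
  have hp : (0:ℝ) < x / 2 := by linarith
  have hsum0 : Summable (bterm (ν - 1) x) := summable_bterm _ _ (by linarith) hx
  have hsum2 : Summable (bterm (ν + 1) x) := summable_bterm _ _ (by linarith) hx
  have hsumν : Summable (bterm ν x) := summable_bterm _ _ (by linarith) hx
  have key : ∀ k : ℕ, bterm (ν - 1) x (k + 1) + bterm (ν + 1) x k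
      = (2 * ν / x) * bterm ν x (k + 1) := by
    intro k
    have hG : 0 < Real.Gamma (ν + (k:ℝ) + 1) := Real.Gamma_pos_of_pos (by positivity)
    have hkf : (0:ℝ) < (Nat.factorial k : ℝ) := by exact_mod_cast k.factorial_pos
    have hq : (0:ℝ) < (x/2) ^ (ν + 2 * (k:ℝ)) := Real.rpow_pos_of_pos hp _
    simp only [bterm, Nat.factorial_succ]
    push_cast
    have e1 : (x/2) ^ (ν - 1 + 2 * ((k:ℝ)+1)) = (x/2) ^ (ν + 2*(k:ℝ)) * (x/2) := by
      rw [show ν - 1 + 2*((k:ℝ)+1) = (ν + 2*(k:ℝ)) + 1 by ring, Real.rpow_add hp,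
        Real.rpow_one]
    have e2 : (x/2) ^ (ν + 1 + 2 * (k:ℝ)) = (x/2) ^ (ν + 2*(k:ℝ)) * (x/2) := by
      rw [show ν + 1 + 2*(k:ℝ) = (ν + 2*(k:ℝ)) + 1 by ring, Real.rpow_add hp, Real.rpow_one]
    have e3 : (x/2) ^ (ν + 2 * ((k:ℝ)+1)) = (x/2) ^ (ν + 2*(k:ℝ)) * (x/2) * (x/2) := by
      rw [show ν + 2*((k:ℝ)+1) = ((ν + 2*(k:ℝ)) + 1) + 1 by ring, Real.rpow_add hp,
        Real.rpow_add hp, Real.rpow_one]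
    have g1 : Real.Gamma (ν - 1 + ((k:ℝ)+1) + 1) = Real.Gamma (ν + (k:ℝ) + 1) := by
      ring_nf
    have g2 : Real.Gamma (ν + 1 + (k:ℝ) + 1) = (ν + (k:ℝ) + 1) * Real.Gamma (ν + (k:ℝ) + 1) := by
      rw [show ν + 1 + (k:ℝ) + 1 = (ν + (k:ℝ) + 1) + 1 by ring,
        Real.Gamma_add_one (by positivity)]
    have g3 : Real.Gamma (ν + ((k:ℝ)+1) + 1) = (ν + (k:ℝ) + 1) * Real.Gamma (ν + (k:ℝ) + 1) := by
      rw [show ν + ((k:ℝ)+1) + 1 = (ν + (k:ℝ) + 1) + 1 by ring,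
        Real.Gamma_add_one (by positivity)]
    rw [e1, e2, e3, g1, g2, g3, pow_succ]
    field_simp
    ring
  have key0 : bterm (ν - 1) x 0 = (2 * ν / x) * bterm ν x 0 := by
    have hG : 0 < Real.Gamma ν := Real.Gamma_pos_of_pos hν
    simp only [bterm, Nat.factorial_zero, Nat.cast_zero, Nat.cast_one, pow_zero]
    have e1 : (x/2) ^ (ν + 2 * (0:ℝ)) = (x/2) ^ (ν - 1 + 2*(0:ℝ)) * (x/2) := by
      rw [show ν + 2*(0:ℝ) = (ν - 1 + 2*(0:ℝ)) + 1 by ring, Real.rpow_add hp, Real.rpow_one]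
    have g1 : Real.Gamma (ν - 1 + (0:ℝ) + 1) = Real.Gamma ν := by ring_nf
    have g2 : Real.Gamma (ν + (0:ℝ) + 1) = ν * Real.Gamma ν := by
      rw [show ν + (0:ℝ) + 1 = ν + 1 by ring, Real.Gamma_add_one (ne_of_gt hν)]
    rw [e1, g1, g2]
    field_simp
  calc besselJ (ν - 1) x + besselJ (ν + 1) x
      = (bterm (ν - 1) x 0 + ∑' k, bterm (ν - 1) x (k + 1)) + ∑' k, bterm (ν + 1) x k := by
        rw [besselJ_eq_tsum, besselJ_eq_tsum, Summable.tsum_eq_zero_add hsum0]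
    _ = bterm (ν - 1) x 0 + ∑' k, (bterm (ν - 1) x (k + 1) + bterm (ν + 1) x k) := by
        rw [Summable.tsum_add ((summable_nat_add_iff 1).2 hsum0) hsum2]; ring
    _ = (2 * ν / x) * bterm ν x 0 + ∑' k, (2 * ν / x) * bterm ν x (k + 1) := by
        rw [key0]; congr 1; exact tsum_congr key
    _ = (2 * ν / x) * (bterm ν x 0 + ∑' k, bterm ν x (k + 1)) := by
        rw [tsum_mul_left]; ring
    _ = (2 * ν / x) * besselJ ν x := by rw [besselJ_eq_tsum, Summable.tsum_eq_zero_add hsumν]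

theorem stmt_19 (s x y : ℝ) (hs : 0 < s) (hx : 0 < x) (hy : 0 < y) (hxy : x ≠ y) :
    2 * besselKernel (2 * s) (4 * x) (4 * y)
        - 2 * Real.sqrt (x / y) * besselKernel (2 * s - 1) (4 * x) (4 * y)
      = -(besselJ (2 * s) (2 * Real.sqrt x)) * besselJ (2 * s - 1) (2 * Real.sqrt y)
          / (2 * Real.sqrt y) := by
  obtain ⟨u, hu, rfl⟩ : ∃ u, 0 < u ∧ x = u ^ 2 :=
    ⟨Real.sqrt x, Real.sqrt_pos.2 hx, (Real.sq_sqrt hx.le).symm⟩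
  obtain ⟨v, hv, rfl⟩ : ∃ v, 0 < v ∧ y = v ^ 2 :=
    ⟨Real.sqrt y, Real.sqrt_pos.2 hy, (Real.sq_sqrt hy.le).symm⟩
  have hsu : Real.sqrt (u ^ 2) = u := Real.sqrt_sq hu.le
  have hsv : Real.sqrt (v ^ 2) = v := Real.sqrt_sq hv.le
  have hsx : Real.sqrt (4 * u ^ 2) = 2 * u := by
    rw [show (4:ℝ) * u ^ 2 = (2 * u) ^ 2 by ring, Real.sqrt_sq (by positivity)]
  have hsy : Real.sqrt (4 * v ^ 2) = 2 * v := by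
    rw [show (4:ℝ) * v ^ 2 = (2 * v) ^ 2 by ring, Real.sqrt_sq (by positivity)]
  have hdiv : Real.sqrt (u ^ 2 / v ^ 2) = u / v := by
    rw [show u ^ 2 / v ^ 2 = (u / v) ^ 2 by ring, Real.sqrt_sq (by positivity)]
  have hrx := besselJ_recurrence (2 * s) (2 * u) (by linarith) (by positivity)
  have hry := besselJ_recurrence (2 * s) (2 * v) (by linarith) (by positivity)
  have hAx : besselJ (2 * s + 1) (2 * u)
      = (2 * (2 * s) / (2 * u)) * besselJ (2 * s) (2 * u) - besselJ (2 * s - 1) (2 * u) := by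
    linarith
  have hAy : besselJ (2 * s + 1) (2 * v)
      = (2 * (2 * s) / (2 * v)) * besselJ (2 * s) (2 * v) - besselJ (2 * s - 1) (2 * v) := by
    linarith
  have hone : (2 : ℝ) * s - 1 + 1 = 2 * s := by ring
  have huv : u ^ 2 - v ^ 2 ≠ 0 := sub_ne_zero.2 hxy
  have h8 : (4:ℝ) * u ^ 2 - 4 * v ^ 2 ≠ 0 := by
    intro h; exact huv (by linarith)
  rw [besselKernel, besselKernel, hsx, hsy, hdiv, hone, hAx, hAy, hsu, hsv]
  field_simp
  ring
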